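/- Robust stability under differentiable parameter variations: Suppose there exist a continuously differentiable matrix-valued function P : 𝒫 → Sⁿ with P(θ) positive definite for every θ ∈ 𝒫 and ε > 0 such that ∂_ρ P(θ)μ + A(θ)ᵀP(θ) + P(θ)A(θ) ⪯ −εIₙ for all θ ∈ 𝒫 and all μ ∈ 𝒟ᵛ. Then for every continuously differentiable ρ : [0,∞) → 𝒫 with ρ̇(t) ∈ 𝒟 for all t ≥ 0, every continuously differentiable x : [0,∞) → ℝⁿ satisfying ẋ(t) = A(ρ(t))x(t) for all t ≥ 0 satisfies x(t) → 0 as t → ∞. -/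

import Mathlib

/-!
Statement 5: robust stability under differentiable parameter variations:
if `∂_ρP(θ)μ + A(θ)ᵀP(θ) + P(θ)A(θ) ⪯ −εIₙ` on `𝒫 × 𝒟ᵛ` for a continuously
differentiable `P ≻ 0`, then every solution of `ẋ = A(ρ(t))x` along a
continuously differentiable parameter trajectory `ρ` with `ρ̇(t) ∈ 𝒟`
converges to zero.
-/

attribute [local instance] Matrix.normedAddCommGroup Matrix.normedSpace

open Matrix Filter Set


lemma dp_self_nonneg {n : ℕ} (v : Fin n → ℝ) : 0 ≤ v ⬝ᵥ v :=
  Finset.sum_nonneg fun i _ => mul_self_nonneg _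

lemma linear_box_le {N : ℕ} (f : (Fin N → ℝ) →ₗ[ℝ] ℝ) (νlo νhi μ : Fin N → ℝ)
    (hμ : μ ∈ Set.Icc νlo νhi) :
    ∃ μs, (∀ i, μs i = νlo i ∨ μs i = νhi i) ∧ f μ ≤ f μs := by
  classical
  set a : Fin N → ℝ := fun i => f (fun j => if i = j then 1 else 0) with ha
  refine ⟨fun i => if 0 ≤ a i then νhi i else νlo i, fun i => by dsimp only; split <;> simp, ?_⟩
  rw [LinearMap.pi_apply_eq_sum_univ, LinearMap.pi_apply_eq_sum_univ]
  apply Finset.sum_le_sum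
  intro i _
  have hai : (f fun j => if i = j then 1 else 0) = a i := rfl
  rw [smul_eq_mul, smul_eq_mul, hai]
  by_cases h : 0 ≤ a i
  · simp only [h, if_true]
    exact mul_le_mul_of_nonneg_right (hμ.2 i) h
  · simp only [h, if_false]
    exact mul_le_mul_of_nonpos_right (hμ.1 i) (le_of_not_ge h)

lemma quad_deriv_eq {n : ℕ} (Aθ Q D : Matrix (Fin n) (Fin n) ℝ) (v : Fin n → ℝ) :
    (∑ i, ((Aθ *ᵥ v) i * (∑ j, Q i j * v j)
      + v i * (∑ j, (D i j * v j + Q i j * ((Aθ *ᵥ v) j)))))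
    = v ⬝ᵥ (D + Aθᵀ * Q + Q * Aθ) *ᵥ v := by
  have e1 : ∀ (M : Matrix (Fin n) (Fin n) ℝ) (w : Fin n → ℝ) (i : Fin n),
      (∑ j, M i j * w j) = (M *ᵥ w) i := fun M w i => rfl
  simp only [Finset.sum_add_distrib, mul_add, e1]
  have h2 : ∀ (a b : Fin n → ℝ), (∑ i, a i * b i) = a ⬝ᵥ b := fun a b => rfl
  simp only [h2]
  rw [add_mulVec, add_mulVec, dotProduct_add, dotProduct_add]
  have hA : (Aθ *ᵥ v) ⬝ᵥ (Q *ᵥ v) = v ⬝ᵥ (Aθᵀ * Q) *ᵥ v := by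
    rw [dotProduct_mulVec v, ← vecMul_vecMul, vecMul_transpose, ← dotProduct_mulVec]
  have hB : v ⬝ᵥ (Q *ᵥ (Aθ *ᵥ v)) = v ⬝ᵥ (Q * Aθ) *ᵥ v := by rw [mulVec_mulVec]
  linarith [hA, hB]

theorem robust_stability
    {n N : ℕ}
    -- the parameter box 𝒫 = [ρlo, ρhi] and the derivative box 𝒟 = [νlo, νhi]
    (ρlo ρhi νlo νhi : Fin N → ℝ)
    (hbox : ρlo ≤ ρhi) (hνbox : νlo ≤ νhi)
    -- the system matrix, continuous (hence bounded) on the compact box 𝒫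
    (A : (Fin N → ℝ) → Matrix (Fin n) (Fin n) ℝ)
    (hA : ContinuousOn A (Icc ρlo ρhi))
    -- the Lyapunov certificate
    (ε : ℝ) (hε : 0 < ε)
    (P : (Fin N → ℝ) → Matrix (Fin n) (Fin n) ℝ)
    (hP_c1 : ContDiff ℝ 1 P)
    (hP_symm : ∀ θ, (P θ).IsSymm)
    (hP_pd : ∀ θ ∈ Icc ρlo ρhi, (P θ).PosDef)
    -- the robust stability LMI: ∂_ρP(θ)μ + A(θ)ᵀP(θ) + P(θ)A(θ) ⪯ −εIₙ on 𝒫 × 𝒟ᵛ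
    (hLMI : ∀ θ ∈ Icc ρlo ρhi,
      ∀ μ : Fin N → ℝ, (∀ i, μ i = νlo i ∨ μ i = νhi i) →
      (-(ε • (1 : Matrix (Fin n) (Fin n) ℝ))
        - (fderiv ℝ P θ μ + (A θ)ᵀ * P θ + P θ * A θ)).PosSemidef)
    -- a continuously differentiable parameter trajectory valued in 𝒫 with derivative in 𝒟
    (ρ ρ' : ℝ → Fin N → ℝ)
    (hρP : ∀ t ≥ (0 : ℝ), ρ t ∈ Icc ρlo ρhi)
    (hρdiff : ∀ t ≥ (0 : ℝ), HasDerivWithinAt ρ (ρ' t) (Ici 0) t)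
    (hρ'cont : ContinuousOn ρ' (Ici 0))
    (hρ'D : ∀ t ≥ (0 : ℝ), ρ' t ∈ Icc νlo νhi)
    -- a continuously differentiable solution of the LPV system
    (x : ℝ → Fin n → ℝ)
    (hxdiff : ∀ t ≥ (0 : ℝ), HasDerivWithinAt x ((A (ρ t)).mulVec (x t)) (Ici 0) t)
    (hxcont : ContinuousOn x (Ici 0)) :
    Tendsto x atTop (nhds 0) := by
  rcases Nat.eq_zero_or_pos n with hn | hn
  · subst hn
    have hx0 : x = fun _ => 0 := funext fun t => funext fun i => i.elim0
    rw [hx0]; exact tendsto_const_nhds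
  -- uniform bounds on the quadratic form
  obtain ⟨c, C, hc, hC, hlow, hupp⟩ :
      ∃ c C : ℝ, 0 < c ∧ 0 < C ∧
        (∀ θ ∈ Icc ρlo ρhi, ∀ v : Fin n → ℝ, c * (v ⬝ᵥ v) ≤ v ⬝ᵥ (P θ) *ᵥ v) ∧
        (∀ θ ∈ Icc ρlo ρhi, ∀ v : Fin n → ℝ, v ⬝ᵥ (P θ) *ᵥ v ≤ C * (v ⬝ᵥ v)) := by
    set S : Set (Fin n → ℝ) := {v | v ⬝ᵥ v = 1} with hSdef
    have hScl : IsClosed S :=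
      isClosed_eq (continuous_id.dotProduct continuous_id) continuous_const
    have hSbd : Bornology.IsBounded S := by
      refine isBounded_iff_forall_norm_le.2 ⟨1, fun v hv => ?_⟩
      refine (pi_norm_le_iff_of_nonneg zero_le_one).2 fun i => ?_
      rw [Real.norm_eq_abs, abs_le_one_iff_mul_self_le_one]
      calc v i * v i ≤ v ⬝ᵥ v :=
            Finset.single_le_sum (fun j _ => mul_self_nonneg (v j)) (Finset.mem_univ i)
        _ = 1 := hv
    have hS : IsCompact S := Metric.isCompact_of_isClosed_isBounded hScl hSbd
    have hK : IsCompact ((Icc ρlo ρhi) ×ˢ S) := isCompact_Icc.prod hS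
    have hKne : ((Icc ρlo ρhi) ×ˢ S).Nonempty := by
      refine ⟨(ρlo, Pi.single ⟨0, hn⟩ 1), mem_prod.2 ⟨mem_Icc.2 ⟨le_refl _, hbox⟩, ?_⟩⟩
      show (Pi.single ⟨0, hn⟩ 1 : Fin n → ℝ) ⬝ᵥ Pi.single ⟨0, hn⟩ 1 = 1
      classical
      simp [dotProduct, Pi.single_apply]
    set f : (Fin N → ℝ) × (Fin n → ℝ) → ℝ := fun p => p.2 ⬝ᵥ (P p.1) *ᵥ p.2 with hfdef
    have hfc : Continuous f :=
      continuous_snd.dotProduct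
        ((hP_c1.continuous.comp continuous_fst).matrix_mulVec continuous_snd)
    obtain ⟨p0, hp0K, hmin⟩ := hK.exists_isMinOn hKne hfc.continuousOn
    obtain ⟨p1, hp1K, hmax⟩ := hK.exists_isMaxOn hKne hfc.continuousOn
    have hp0S : p0.2 ⬝ᵥ p0.2 = 1 := (mem_prod.1 hp0K).2
    have hp0ne : p0.2 ≠ 0 := by
      intro h0
      rw [h0] at hp0S
      simp [dotProduct] at hp0S
    have hfp0pos : 0 < f p0 := by
      have hpd := hP_pd p0.1 (mem_prod.1 hp0K).1
      have := hpd.dotProduct_mulVec_pos hp0ne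
      have hstar : star p0.2 = p0.2 := by funext i; simp
      rwa [hstar] at this
    have hcC : f p0 ≤ f p1 := isMinOn_iff.mp hmin p1 hp1K
    have hscale : ∀ θ ∈ Icc ρlo ρhi, ∀ v : Fin n → ℝ,
        f p0 * (v ⬝ᵥ v) ≤ v ⬝ᵥ (P θ) *ᵥ v ∧ v ⬝ᵥ (P θ) *ᵥ v ≤ f p1 * (v ⬝ᵥ v) := by
      intro θ hθ v
      by_cases hv : v = 0
      · subst hv
        simp [zero_dotProduct]
      · have hvv : 0 < v ⬝ᵥ v :=
          lt_of_le_of_ne (dp_self_nonneg v) (Ne.symm (mt dotProduct_self_eq_zero.mp hv))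
        set r : ℝ := Real.sqrt (v ⬝ᵥ v) with hrdef
        have hr : 0 < r := Real.sqrt_pos.2 hvv
        have hrr : r * r = v ⬝ᵥ v := Real.mul_self_sqrt (dp_self_nonneg v)
        set u : Fin n → ℝ := r⁻¹ • v with hudef
        have hu : u ⬝ᵥ u = 1 := by
          rw [hudef, smul_dotProduct, dotProduct_smul, smul_eq_mul, smul_eq_mul, ← hrr]
          field_simp
        have hmem : (θ, u) ∈ (Icc ρlo ρhi) ×ˢ S := mem_prod.2 ⟨hθ, hu⟩
        have h1 : f p0 ≤ u ⬝ᵥ (P θ) *ᵥ u := isMinOn_iff.mp hmin (θ, u) hmem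
        have h2 : u ⬝ᵥ (P θ) *ᵥ u ≤ f p1 := isMaxOn_iff.mp hmax (θ, u) hmem
        have hvu : v = r • u := by rw [hudef, smul_smul, mul_inv_cancel₀ hr.ne', one_smul]
        have hquad : v ⬝ᵥ (P θ) *ᵥ v = r * (r * (u ⬝ᵥ (P θ) *ᵥ u)) := by
          rw [hvu, smul_dotProduct, mulVec_smul, dotProduct_smul, smul_eq_mul, smul_eq_mul]
        constructor
        · rw [hquad, ← hrr]
          nlinarith [hr, h1]
        · rw [hquad, ← hrr]
          nlinarith [hr, h2]
    exact ⟨f p0, f p1, hfp0pos, lt_of_lt_of_le hfp0pos hcC,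
      fun θ hθ v => (hscale θ hθ v).1, fun θ hθ v => (hscale θ hθ v).2⟩
  -- scalar LMI extended to the whole derivative box
  have key : ∀ θ ∈ Icc ρlo ρhi, ∀ μ ∈ Icc νlo νhi, ∀ v : Fin n → ℝ,
      v ⬝ᵥ (fderiv ℝ P θ μ + (A θ)ᵀ * P θ + P θ * A θ) *ᵥ v ≤ -ε * (v ⬝ᵥ v) := by
    intro θ hθ μ hμ v
    set L : (Fin N → ℝ) →ₗ[ℝ] ℝ :=
      { toFun := fun ν => v ⬝ᵥ ((fderiv ℝ P θ) ν) *ᵥ v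
        map_add' := fun a b => by
          show v ⬝ᵥ ((fderiv ℝ P θ) (a + b)) *ᵥ v
            = v ⬝ᵥ ((fderiv ℝ P θ) a) *ᵥ v + v ⬝ᵥ ((fderiv ℝ P θ) b) *ᵥ v
          rw [(fderiv ℝ P θ).map_add, add_mulVec, dotProduct_add]
        map_smul' := fun r a => by
          show v ⬝ᵥ ((fderiv ℝ P θ) (r • a)) *ᵥ v = r • (v ⬝ᵥ ((fderiv ℝ P θ) a) *ᵥ v)
          rw [(fderiv ℝ P θ).map_smul, smul_mulVec, dotProduct_smul] } with hL
    obtain ⟨μs, hμs, hLe⟩ := linear_box_le L νlo νhi μ hμ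
    have hpsd := (hLMI θ hθ μs hμs).dotProduct_mulVec_nonneg v
    have hstar : star v = v := by
      funext i; simp
    rw [hstar, sub_mulVec, neg_mulVec, smul_mulVec, one_mulVec, dotProduct_sub,
      dotProduct_neg, dotProduct_smul, smul_eq_mul] at hpsd
    have hexp : ∀ ν : Fin N → ℝ,
        v ⬝ᵥ (fderiv ℝ P θ ν + (A θ)ᵀ * P θ + P θ * A θ) *ᵥ v
          = L ν + (v ⬝ᵥ ((A θ)ᵀ * P θ) *ᵥ v + v ⬝ᵥ (P θ * A θ) *ᵥ v) := by
      intro ν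
      rw [add_mulVec, add_mulVec, dotProduct_add, dotProduct_add]
      show _ = v ⬝ᵥ ((fderiv ℝ P θ) ν) *ᵥ v + _
      ring
    rw [hexp μ, hexp μs] at *
    have hLe' : L μ ≤ L μs := hLe
    linarith
  -- derivative of the Lyapunov function
  set V : ℝ → ℝ := fun s => x s ⬝ᵥ (P (ρ s)) *ᵥ x s with hVdef
  have hV : ∀ t ∈ Ici (0:ℝ), HasDerivWithinAt V
      (x t ⬝ᵥ (fderiv ℝ P (ρ t) (ρ' t) + (A (ρ t))ᵀ * P (ρ t) + P (ρ t) * A (ρ t)) *ᵥ x t)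
      (Ici 0) t := by
    intro t ht
    have hPt : HasDerivWithinAt (fun s => P (ρ s)) (fderiv ℝ P (ρ t) (ρ' t)) (Ici 0) t :=
      ((hP_c1.differentiable one_ne_zero) (ρ t)).hasFDerivAt.comp_hasDerivWithinAt t (hρdiff t ht)
    have hPij : ∀ i j, HasDerivWithinAt (fun s => P (ρ s) i j)
        ((fderiv ℝ P (ρ t) (ρ' t)) i j) (Ici 0) t := by
      intro i j
      exact hasDerivWithinAt_pi.mp (hasDerivWithinAt_pi.mp hPt i) j
    have hxi : ∀ i, HasDerivWithinAt (fun s => x s i) ((A (ρ t) *ᵥ x t) i) (Ici 0) t :=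
      fun i => hasDerivWithinAt_pi.mp (hxdiff t ht) i
    have hsum : HasDerivWithinAt (fun s => ∑ i, x s i * (∑ j, P (ρ s) i j * x s j))
        (∑ i, ((A (ρ t) *ᵥ x t) i * (∑ j, P (ρ t) i j * x t j)
          + x t i * (∑ j, ((fderiv ℝ P (ρ t) (ρ' t)) i j * x t j
            + P (ρ t) i j * ((A (ρ t) *ᵥ x t) j))))) (Ici 0) t := by
      apply HasDerivWithinAt.fun_sum
      intro i _
      exact (hxi i).mul (HasDerivWithinAt.fun_sum fun j _ => (hPij i j).mul (hxi j))
    rw [← quad_deriv_eq (A (ρ t)) (P (ρ t)) (fderiv ℝ P (ρ t) (ρ' t)) (x t)]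
    exact hsum
  -- the weighted Lyapunov function is antitone
  set k : ℝ := ε / C with hkdef
  have hk : 0 < k := div_pos hε hC
  have hCk : C * k = ε := mul_div_cancel₀ ε hC.ne'
  set g : ℝ → ℝ := fun s => V s * Real.exp (k * s) with hgdef
  have hg : ∀ t ∈ Ici (0:ℝ), HasDerivWithinAt g
      ((x t ⬝ᵥ (fderiv ℝ P (ρ t) (ρ' t) + (A (ρ t))ᵀ * P (ρ t) + P (ρ t) * A (ρ t)) *ᵥ x t)
        * Real.exp (k * t) + V t * (Real.exp (k * t) * k)) (Ici 0) t := by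
    intro t ht
    have hexp : HasDerivAt (fun s => Real.exp (k * s)) (Real.exp (k * t) * k) t := by
      simpa [Function.comp_def] using (Real.hasDerivAt_exp (k * t)).comp t ((hasDerivAt_id t).const_mul k)
    exact (hV t ht).mul hexp.hasDerivWithinAt
  have hgderiv_nonpos : ∀ t ∈ Ici (0:ℝ),
      (x t ⬝ᵥ (fderiv ℝ P (ρ t) (ρ' t) + (A (ρ t))ᵀ * P (ρ t) + P (ρ t) * A (ρ t)) *ᵥ x t)
        * Real.exp (k * t) + V t * (Real.exp (k * t) * k) ≤ 0 := by
    intro t ht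
    have h1 := key (ρ t) (hρP t ht) (ρ' t) (hρ'D t ht) (x t)
    have h2 := hupp (ρ t) (hρP t ht) (x t)
    have h3 := dp_self_nonneg (x t)
    have h4 := (Real.exp_pos (k * t))
    have hVt : V t ≤ C * (x t ⬝ᵥ x t) := h2
    have ha := mul_le_mul_of_nonneg_right h1 h4.le
    have hb := mul_le_mul_of_nonneg_right hVt (mul_nonneg h4.le hk.le)
    have hz : (-ε * (x t ⬝ᵥ x t)) * Real.exp (k * t)
        + (C * (x t ⬝ᵥ x t)) * (Real.exp (k * t) * k) = 0 := by
      rw [← hCk]; ring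
    linarith
  have hanti : AntitoneOn g (Ici 0) := by
    apply antitoneOn_of_deriv_nonpos (convex_Ici 0)
      (fun t ht => (hg t ht).continuousWithinAt)
    · intro t ht
      rw [interior_Ici] at ht
      exact (((hg t (mem_Ici.2 (le_of_lt (mem_Ioi.1 ht)))).hasDerivAt (Ici_mem_nhds (mem_Ioi.1 ht))).differentiableAt).differentiableWithinAt
    · intro t ht
      rw [interior_Ici] at ht
      rw [((hg t (mem_Ici.2 (le_of_lt (mem_Ioi.1 ht)))).hasDerivAt (Ici_mem_nhds (mem_Ioi.1 ht))).deriv]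
      exact hgderiv_nonpos t (mem_Ici.2 (le_of_lt (mem_Ioi.1 ht)))
  -- decay of the squared norm
  set d : ℝ → ℝ := fun t => x t ⬝ᵥ x t with hddef
  have hdle : ∀ t ≥ (0:ℝ), d t ≤ (V 0 / c) * Real.exp (-(k * t)) := by
    intro t ht
    have hgt : g t ≤ g 0 := hanti (self_mem_Ici) ht ht
    have hg0 : g 0 = V 0 := by simp [hgdef]
    have hVt : V t * Real.exp (k * t) ≤ V 0 := by rw [← hg0]; exact hgt
    have hl := hlow (ρ t) (hρP t ht) (x t)
    have h4 := Real.exp_pos (k * t)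
    have hE : Real.exp (k * t) * Real.exp (-(k * t)) = 1 := by
      rw [← Real.exp_add]; simp
    have hcc : c * (V 0 / c) = V 0 := mul_div_cancel₀ _ hc.ne'
    have h5 : c * d t * Real.exp (k * t) ≤ V 0 :=
      le_trans (mul_le_mul_of_nonneg_right hl h4.le) hVt
    have h6 : c * d t ≤ V 0 * Real.exp (-(k * t)) := by
      have h7 := mul_le_mul_of_nonneg_right h5 (Real.exp_pos (-(k * t))).le
      calc c * d t = c * d t * (Real.exp (k * t) * Real.exp (-(k * t))) := by rw [hE]; ring
        _ = c * d t * Real.exp (k * t) * Real.exp (-(k * t)) := by ring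
        _ ≤ V 0 * Real.exp (-(k * t)) := h7
    rw [div_mul_eq_mul_div, le_div_iff₀ hc]
    linarith
  have hd0 : Tendsto d atTop (nhds 0) := by
    have hb : Tendsto (fun t => (V 0 / c) * Real.exp (-(k * t))) atTop (nhds 0) := by
      have h1 : Tendsto (fun t : ℝ => k * t) atTop atTop :=
        Tendsto.const_mul_atTop hk tendsto_id
      have h2 := Real.tendsto_exp_neg_atTop_nhds_zero.comp h1
      have := h2.const_mul (V 0 / c)
      simpa using this
    refine tendsto_of_tendsto_of_tendsto_of_le_of_le' tendsto_const_nhds hb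
      ((eventually_ge_atTop 0).mono fun t _ => dp_self_nonneg (x t))
      ((eventually_ge_atTop 0).mono fun t ht => hdle t ht)
  -- conclude
  rw [tendsto_zero_iff_norm_tendsto_zero]
  have hsqrt : Tendsto (fun t => Real.sqrt (d t)) atTop (nhds 0) := by
    have := (Real.continuous_sqrt.tendsto 0).comp hd0
    simpa [Function.comp_def] using this
  refine tendsto_of_tendsto_of_tendsto_of_le_of_le' tendsto_const_nhds hsqrt
    (Eventually.of_forall fun t => norm_nonneg _)
    (Eventually.of_forall fun t => ?_)
  refine (pi_norm_le_iff_of_nonneg (Real.sqrt_nonneg _)).2 fun i => ?_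
  rw [Real.norm_eq_abs]
  apply Real.abs_le_sqrt
  have : x t i * x t i ≤ d t :=
    Finset.single_le_sum (fun j _ => mul_self_nonneg (x t j)) (Finset.mem_univ i)
  rw [pow_two]; exact this
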